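/- Affine invariance of the P-algorithm criterion: let y : Fin n → ℝ, a > 0, b : ℝ, z i = a*y i + b. Let μ̄, σ̄ > 0 be estimates for y and set μ̃ = aμ̄ + b, σ̃ = aσ̄. For any vector Υ and matrix M with ∑Υ_i M_{ij} Υ_j < 1, define the improvement-probability argument T(y, μ, σ) = (min_i y_i − εσ − (μ + ∑_{i,j}(y_i − μ)M_{ij}Υ_j)) / (σ·√(1 − ∑Υ_i M_{ij} Υ_j)) for ε > 0. Then T(z, μ̃, σ̃) = T(y, μ̄, σ̄). -/

import Mathlib

theorem P_criterion_affine_invariant (n : ℕ) (hn : 1 ≤ n) (y : Fin n → ℝ)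
    (a b ε : ℝ) (ha : 0 < a) (hε : 0 < ε)
    (z : Fin n → ℝ) (hz : ∀ i, z i = a * y i + b)
    (M : Matrix (Fin n) (Fin n) ℝ) (Υ : Fin n → ℝ)
    (hq : ∑ i, ∑ j, Υ i * M i j * Υ j < 1)
    (μy σy : ℝ) (hσy : 0 < σy)
    (μz σz : ℝ) (hμz : μz = a * μy + b) (hσz : σz = a * σy)
    (hne : 0 < n)
    (T : (Fin n → ℝ) → ℝ → ℝ → ℝ)
    (hT : ∀ w μ σ, T w μ σ =
      ((Finset.univ.inf' (Finset.univ_nonempty_iff.mpr (Fin.pos_iff_nonempty.mp hne)) w)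
        - ε * σ - (μ + ∑ i, ∑ j, (w i - μ) * M i j * Υ j))
      / (σ * Real.sqrt (1 - ∑ i, ∑ j, Υ i * M i j * Υ j))) :
    T z μz σz = T y μy σy := by
  have hmono : Monotone (fun x : ℝ => a * x + b) := by
    intro s t hst
    have := mul_le_mul_of_nonneg_left hst ha.le
    simpa using add_le_add_right this b
  have hinf : (Finset.univ.inf'
      (Finset.univ_nonempty_iff.mpr (Fin.pos_iff_nonempty.mp hne)) z)
      = a * (Finset.univ.inf'
      (Finset.univ_nonempty_iff.mpr (Fin.pos_iff_nonempty.mp hne)) y) + b := by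
    have := Finset.apply_inf'_eq_inf'_comp
      (Finset.univ_nonempty_iff.mpr (Fin.pos_iff_nonempty.mp hne)) (f := y)
      (g := fun x : ℝ => a * x + b)
      (fun x y => hmono.map_inf x y)
    simp only [Function.comp] at this
    rw [show z = fun x => a * y x + b from funext hz]
    exact this.symm
  have hsum : (∑ i, ∑ j, (z i - μz) * M i j * Υ j)
      = a * ∑ i, ∑ j, (y i - μy) * M i j * Υ j := by
    rw [Finset.mul_sum]
    refine Finset.sum_congr rfl fun i _ => ?_
    rw [Finset.mul_sum]
    refine Finset.sum_congr rfl fun j _ => ?_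
    rw [hz, hμz]; ring
  rw [hT, hT, hinf, hsum, hμz, hσz]
  rw [show a * (Finset.univ.inf'
      (Finset.univ_nonempty_iff.mpr (Fin.pos_iff_nonempty.mp hne)) y) + b
      - ε * (a * σy) - (a * μy + b + a * ∑ i, ∑ j, (y i - μy) * M i j * Υ j)
      = a * ((Finset.univ.inf'
      (Finset.univ_nonempty_iff.mpr (Fin.pos_iff_nonempty.mp hne)) y)
      - ε * σy - (μy + ∑ i, ∑ j, (y i - μy) * M i j * Υ j)) by ring,
    mul_assoc]
  exact mul_div_mul_left _ _ ha.ne'
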